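/- Let σ ∈ Sₙ be a product of j pairwise disjoint cycles τ₁,…,τ_j (each of length ≥ 2). With τ̌ᵢ defined as τ̌ᵢ = (x a_{i,2})⋯(x a_{i,kᵢ})(y a_{i,1})(y a_{i,2})(x a_{i,1}) for τᵢ = (a_{i,1} ⋯ a_{i,kᵢ}), we have σ⁻¹ = (x y)·τ̌_j⋯τ̌₁ if j is odd, and σ⁻¹ = τ̌_j⋯τ̌₁ if j is even. -/

import Mathlib

/-- `tauCheck x y l` is the permutation τ̌ associated to the cycle given by the list
`l = [a₁, a₂, …]`, namely `(x a₂)(x a₃)⋯(x a_k)(y a₁)(y a₂)(x a₁)`. -/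
def tauCheck (x y : ℕ) : List ℕ → Equiv.Perm ℕ
  | a₁ :: a₂ :: rest =>
      ((a₂ :: rest).map (Equiv.swap x)).prod * Equiv.swap y a₁ *
        Equiv.swap y a₂ * Equiv.swap x a₁
  | _ => 1

lemma commute_swap_of_fixed (σ : Equiv.Perm ℕ) (a b : ℕ) (ha : σ a = a) (hb : σ b = b) :
    Commute (Equiv.swap a b) σ := by
  have h := Equiv.swap_apply_apply σ a b
  rw [ha, hb] at h
  unfold Commute SemiconjBy
  nth_rewrite 1 [h]
  group

lemma prod_fix (x : ℕ) (ps : List (Equiv.Perm ℕ)) (h : ∀ p ∈ ps, p x = x) :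
    ps.prod x = x := by
  induction ps with
  | nil => simp
  | cons p t ih =>
    simp only [List.prod_cons, Equiv.Perm.mul_apply]
    rw [ih (fun q hq => h q (List.mem_cons_of_mem _ hq)), h p (List.mem_cons_self)]

lemma conj_formPerm (x a : ℕ) (t : List ℕ) (hx : x ∉ t) (ha : a ∉ t) :
    Equiv.swap x a * List.formPerm (x :: t) * Equiv.swap x a = List.formPerm (a :: t) := by
  cases t with
  | nil => simp
  | cons b t' =>
    rw [List.formPerm_cons_cons, List.formPerm_cons_cons]
    have hfix : Commute (Equiv.swap x a) (List.formPerm (b :: t')) :=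
      commute_swap_of_fixed _ _ _ (List.formPerm_apply_of_notMem hx)
        (List.formPerm_apply_of_notMem ha)
    have hb : Equiv.swap x a b = b := by
      apply Equiv.swap_apply_of_ne_of_ne
      · rintro rfl; exact hx (List.mem_cons_self)
      · rintro rfl; exact ha (List.mem_cons_self)
    have h3 : Equiv.swap x a * Equiv.swap x b * Equiv.swap x a = Equiv.swap a b := by
      have h := Equiv.swap_apply_apply (Equiv.swap x a) x b
      rw [Equiv.swap_apply_left, hb, Equiv.swap_inv] at h
      exact h.symm
    calc Equiv.swap x a * (Equiv.swap x b * List.formPerm (b :: t')) * Equiv.swap x a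
        = Equiv.swap x a * Equiv.swap x b * (List.formPerm (b :: t') * Equiv.swap x a) := by
          group
      _ = Equiv.swap x a * Equiv.swap x b * (Equiv.swap x a * List.formPerm (b :: t')) := by
          rw [← hfix.eq]
      _ = (Equiv.swap x a * Equiv.swap x b * Equiv.swap x a) * List.formPerm (b :: t') := by
          group
      _ = Equiv.swap a b * List.formPerm (b :: t') := by rw [h3]

lemma prod_map_swap (x : ℕ) (l : List ℕ) (hx : x ∉ l) (hnd : l.Nodup) :
    (l.map (Equiv.swap x)).prod = (List.formPerm (x :: l))⁻¹ := by
  induction l with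
  | nil => simp
  | cons a t ih =>
    have hxt : x ∉ t := fun h => hx (List.mem_cons_of_mem _ h)
    have hat : a ∉ t := (List.nodup_cons.mp hnd).1
    simp only [List.map_cons, List.prod_cons]
    rw [ih hxt (List.nodup_cons.mp hnd).2, List.formPerm_cons_cons, mul_inv_rev,
      Equiv.swap_inv]
    have h := conj_formPerm x a t hxt hat
    have h2 : (List.formPerm (a :: t))⁻¹
        = Equiv.swap x a * (List.formPerm (x :: t))⁻¹ * Equiv.swap x a := by
      rw [← h]
      simp only [mul_inv_rev, Equiv.swap_inv, mul_assoc]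
    rw [h2]
    simp only [mul_assoc, Equiv.swap_mul_self, mul_one]

lemma tauCheck_eq (x y : ℕ) (l : List ℕ) (hnd : l.Nodup) (hlen : 2 ≤ l.length)
    (hx : x ∉ l) (hy : y ∉ l) (hxy : x ≠ y) :
    tauCheck x y l = Equiv.swap x y * (l.formPerm)⁻¹ := by
  match l, hlen with
  | a₁ :: a₂ :: rest, _ =>
    have hxa₁ : x ≠ a₁ := fun h => hx (h ▸ List.mem_cons_self)
    have hya₁ : y ≠ a₁ := fun h => hy (h ▸ List.mem_cons_self)
    have hya₂ : y ≠ a₂ := fun h => hy (h ▸ List.mem_cons_of_mem _ (List.mem_cons_self))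
    have hxa₂ : x ≠ a₂ := fun h => hx (h ▸ List.mem_cons_of_mem _ (List.mem_cons_self))
    have ha₁a₂ : a₁ ≠ a₂ := fun h =>
      (List.nodup_cons.mp hnd).1 (h ▸ List.mem_cons_self)
    have hxrest : x ∉ a₂ :: rest := fun h => hx (List.mem_cons_of_mem _ h)
    have hcx : (a₁ :: a₂ :: rest).formPerm x = x := List.formPerm_apply_of_notMem hx
    have hcy : (a₁ :: a₂ :: rest).formPerm y = y := List.formPerm_apply_of_notMem hy
    have hca₁ : (a₁ :: a₂ :: rest).formPerm a₁ = a₂ := List.formPerm_apply_head _ _ _ hnd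
    have hM : ((a₂ :: rest).map (Equiv.swap x)).prod
        = (List.formPerm (x :: a₂ :: rest))⁻¹ :=
      prod_map_swap x _ hxrest (List.nodup_cons.mp hnd).2
    have hconj := conj_formPerm x a₁ (a₂ :: rest) hxrest (List.nodup_cons.mp hnd).1
    have hd : (List.formPerm (x :: a₂ :: rest))⁻¹
        = Equiv.swap x a₁ * ((a₁ :: a₂ :: rest).formPerm)⁻¹ * Equiv.swap x a₁ := by
      have hfp : List.formPerm (x :: a₂ :: rest)
          = Equiv.swap x a₁ * (a₁ :: a₂ :: rest).formPerm * Equiv.swap x a₁ := by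
        rw [← hconj]
        simp only [mul_assoc, Equiv.swap_mul_self, mul_one]
        simp
      rw [hfp]
      simp only [mul_inv_rev, Equiv.swap_inv, mul_assoc]
    have e1 : Equiv.swap x a₁ * Equiv.swap y a₁ = Equiv.swap y x * Equiv.swap x a₁ := by
      have h := Equiv.swap_apply_apply (Equiv.swap x a₁) y a₁
      rw [Equiv.swap_apply_of_ne_of_ne (Ne.symm hxy) hya₁, Equiv.swap_apply_right,
        Equiv.swap_inv] at h
      -- h : swap y x = swap x a₁ * swap y a₁ * swap x a₁
      calc Equiv.swap x a₁ * Equiv.swap y a₁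
          = (Equiv.swap x a₁ * Equiv.swap y a₁ * Equiv.swap x a₁) * Equiv.swap x a₁ := by
            simp only [mul_assoc, Equiv.swap_mul_self, mul_one]
        _ = Equiv.swap y x * Equiv.swap x a₁ := by rw [← h]
    have e2 : Equiv.swap x a₁ * Equiv.swap y a₂ = Equiv.swap y a₂ * Equiv.swap x a₁ :=
      (commute_swap_of_fixed (Equiv.swap y a₂) x a₁
        (Equiv.swap_apply_of_ne_of_ne hxy hxa₂)
        (Equiv.swap_apply_of_ne_of_ne (Ne.symm hya₁) ha₁a₂)).eq
    have e3 : ((a₁ :: a₂ :: rest).formPerm)⁻¹ * Equiv.swap y x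
        = Equiv.swap y x * ((a₁ :: a₂ :: rest).formPerm)⁻¹ :=
      ((commute_swap_of_fixed _ y x hcy hcx).inv_right).eq.symm
    have e4 : ((a₁ :: a₂ :: rest).formPerm)⁻¹ * Equiv.swap y a₂
        = Equiv.swap y a₁ * ((a₁ :: a₂ :: rest).formPerm)⁻¹ := by
      have h := Equiv.swap_apply_apply ((a₁ :: a₂ :: rest).formPerm) y a₁
      rw [hcy, hca₁] at h
      rw [h]
      group
    have e5 : Equiv.swap x a₁ * (Equiv.swap y x * Equiv.swap y a₁) = Equiv.swap x y := by
      ext z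
      simp only [Equiv.Perm.mul_apply, Equiv.swap_apply_def]
      split_ifs <;> omega
    show ((a₂ :: rest).map (Equiv.swap x)).prod * Equiv.swap y a₁ *
        Equiv.swap y a₂ * Equiv.swap x a₁
        = Equiv.swap x y * ((a₁ :: a₂ :: rest).formPerm)⁻¹
    rw [hM, hd]
    have e1' : ∀ W : Equiv.Perm ℕ, Equiv.swap x a₁ * (Equiv.swap y a₁ * W)
        = Equiv.swap y x * (Equiv.swap x a₁ * W) :=
      fun W => by rw [← mul_assoc, e1, mul_assoc]
    have e2' : ∀ W : Equiv.Perm ℕ, Equiv.swap x a₁ * (Equiv.swap y a₂ * W)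
        = Equiv.swap y a₂ * (Equiv.swap x a₁ * W) :=
      fun W => by rw [← mul_assoc, e2, mul_assoc]
    have e3' : ∀ W : Equiv.Perm ℕ, ((a₁ :: a₂ :: rest).formPerm)⁻¹ * (Equiv.swap y x * W)
        = Equiv.swap y x * (((a₁ :: a₂ :: rest).formPerm)⁻¹ * W) :=
      fun W => by rw [← mul_assoc, e3, mul_assoc]
    calc Equiv.swap x a₁ * ((a₁ :: a₂ :: rest).formPerm)⁻¹ * Equiv.swap x a₁ *
          Equiv.swap y a₁ * Equiv.swap y a₂ * Equiv.swap x a₁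
        = Equiv.swap x a₁ * (((a₁ :: a₂ :: rest).formPerm)⁻¹ * (Equiv.swap x a₁ *
            (Equiv.swap y a₁ * (Equiv.swap y a₂ * Equiv.swap x a₁)))) := by
          simp only [mul_assoc]
      _ = Equiv.swap x a₁ * (((a₁ :: a₂ :: rest).formPerm)⁻¹ * (Equiv.swap y x *
            (Equiv.swap x a₁ * (Equiv.swap y a₂ * Equiv.swap x a₁)))) := by rw [e1']
      _ = Equiv.swap x a₁ * (((a₁ :: a₂ :: rest).formPerm)⁻¹ * (Equiv.swap y x *
            (Equiv.swap y a₂ * (Equiv.swap x a₁ * Equiv.swap x a₁)))) := by rw [e2']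
      _ = Equiv.swap x a₁ * (((a₁ :: a₂ :: rest).formPerm)⁻¹ *
            (Equiv.swap y x * Equiv.swap y a₂)) := by
          rw [Equiv.swap_mul_self, mul_one]
      _ = Equiv.swap x a₁ * (Equiv.swap y x *
            (((a₁ :: a₂ :: rest).formPerm)⁻¹ * Equiv.swap y a₂)) := by rw [e3']
      _ = Equiv.swap x a₁ * (Equiv.swap y x *
            (Equiv.swap y a₁ * ((a₁ :: a₂ :: rest).formPerm)⁻¹)) := by rw [e4]
      _ = Equiv.swap x a₁ * (Equiv.swap y x * Equiv.swap y a₁) *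
            ((a₁ :: a₂ :: rest).formPerm)⁻¹ := by simp only [mul_assoc]
      _ = Equiv.swap x y * ((a₁ :: a₂ :: rest).formPerm)⁻¹ := by rw [e5]

lemma prod_tauCheck (x y : ℕ) (hxy : x ≠ y) (L : List (List ℕ))
    (h : ∀ l ∈ L, l.Nodup ∧ 2 ≤ l.length ∧ x ∉ l ∧ y ∉ l) :
    (L.reverse.map (tauCheck x y)).prod
      = (Equiv.swap x y) ^ L.length * ((L.map List.formPerm).prod)⁻¹ := by
  induction L with
  | nil => simp
  | cons a t ih =>
    obtain ⟨hnd, hlen, hx, hy⟩ := h a (List.mem_cons_self)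
    have ht : ∀ l ∈ t, l.Nodup ∧ 2 ≤ l.length ∧ x ∉ l ∧ y ∉ l :=
      fun l hl => h l (List.mem_cons_of_mem _ hl)
    have hcomm : Commute (Equiv.swap x y) ((t.map List.formPerm).prod)⁻¹ := by
      apply Commute.inv_right
      apply commute_swap_of_fixed
      · exact prod_fix x _ (by
          intro p hp
          obtain ⟨l, hl, rfl⟩ := List.mem_map.mp hp
          exact List.formPerm_apply_of_notMem (ht l hl).2.2.1)
      · exact prod_fix y _ (by
          intro p hp
          obtain ⟨l, hl, rfl⟩ := List.mem_map.mp hp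
          exact List.formPerm_apply_of_notMem (ht l hl).2.2.2)
    simp only [List.reverse_cons, List.map_append, List.prod_append, List.map_cons,
      List.prod_cons, List.map_nil, List.prod_nil, mul_one, List.length_cons]
    rw [ih ht, tauCheck_eq x y a hnd hlen hx hy hxy, pow_succ]
    calc (Equiv.swap x y) ^ t.length * ((t.map List.formPerm).prod)⁻¹ *
          (Equiv.swap x y * (a.formPerm)⁻¹)
        = (Equiv.swap x y) ^ t.length *
            (((t.map List.formPerm).prod)⁻¹ * Equiv.swap x y) * (a.formPerm)⁻¹ := by
          simp only [mul_assoc]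
      _ = (Equiv.swap x y) ^ t.length *
            (Equiv.swap x y * ((t.map List.formPerm).prod)⁻¹) * (a.formPerm)⁻¹ := by
          rw [← hcomm.eq]
      _ = (Equiv.swap x y) ^ t.length * Equiv.swap x y *
            (((t.map List.formPerm).prod)⁻¹ * (a.formPerm)⁻¹) := by
          simp only [mul_assoc]
      _ = (Equiv.swap x y) ^ t.length * Equiv.swap x y *
            (List.formPerm a * (t.map List.formPerm).prod)⁻¹ := by
          rw [mul_inv_rev]

theorem stmt3 (n : ℕ) (L : List (List ℕ)) (hnd : ∀ l ∈ L, l.Nodup)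
    (hlen : ∀ l ∈ L, 2 ≤ l.length) (hmem : ∀ l ∈ L, ∀ a ∈ l, 1 ≤ a ∧ a ≤ n)
    (hdisj : L.Pairwise fun l l' => ∀ a ∈ l, a ∉ l')
    (σ : Equiv.Perm ℕ) (hσ : σ = (L.map List.formPerm).prod) :
    σ⁻¹ = (if Odd L.length then Equiv.swap (n+1) (n+2) else 1) *
      (L.reverse.map (tauCheck (n+1) (n+2))).prod := by
  have hxy : n + 1 ≠ n + 2 := by omega
  have h : ∀ l ∈ L, l.Nodup ∧ 2 ≤ l.length ∧ (n+1) ∉ l ∧ (n+2) ∉ l := by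
    intro l hl
    refine ⟨hnd l hl, hlen l hl, ?_, ?_⟩
    · intro hx; have := hmem l hl _ hx; omega
    · intro hy; have := hmem l hl _ hy; omega
  rw [prod_tauCheck (n+1) (n+2) hxy L h, hσ]
  rw [← mul_assoc]
  nth_rewrite 1 [← one_mul ((L.map List.formPerm).prod)⁻¹]
  congr 1
  have hsq : Equiv.swap (n+1) (n+2) ^ 2 = 1 := by
    rw [sq, Equiv.swap_mul_self]
  rcases Nat.even_or_odd L.length with he | ho
  · rw [if_neg (by simpa using Nat.not_odd_iff_even.mpr he)]
    obtain ⟨m, hm⟩ := he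
    rw [one_mul, hm, ← two_mul, pow_mul, hsq, one_pow]
  · rw [if_pos ho]
    obtain ⟨m, hm⟩ := ho
    rw [hm, pow_succ, pow_mul, hsq, one_pow, one_mul, Equiv.swap_mul_self]
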